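/- For the discretized truncated exponential horizon of the previous statements, the transition probabilities q_t from the recurrence q_2 = p_2, q_t = p_t / ∏_{k=2}^{t-1}(1−q_k) satisfy the closed form q_{t} = (e^{−λ(t−3/2)} − e^{−λ(t−1/2)}) / (e^{−λ(t−3/2)} − e^{−λ(T_max−1/2)}) for t = 2,...,T_max; in particular q_{T_max} = 1. -/
import Mathlib

private lemma stmt9_aux1 (a b B D : ℝ) (ha : a - B ≠ 0) (hD : D ≠ 0) :
    (a - B) / D * (1 - (a - b) / (a - B)) = (b - B) / D := by
  field_simp
  ring

private lemma stmt9_aux2 (x y D : ℝ) (hD : D ≠ 0) (hy : y ≠ 0) :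
    x / D / (y / D) = x / y := by
  rw [div_div_div_eq, mul_comm x D]
  exact mul_div_mul_left x y hD

/-- For the discretized truncated exponential horizon, with
`p t = (e^{-λ(t-3/2)} - e^{-λ(t-1/2)}) / (e^{-λ/2} - e^{-λ(T_max-1/2)})` and the
recurrence `q 2 = p 2`, `q t = p t / ∏_{k=2}^{t-1}(1 - q k)`, one has the closed
form `q t = (e^{-λ(t-3/2)} - e^{-λ(t-1/2)}) / (e^{-λ(t-3/2)} - e^{-λ(T_max-1/2)})`
for `t = 2,...,T_max`, and in particular `q T_max = 1`. -/
theorem stmt9 (lam : ℝ) (hlam : 0 < lam) (Tmax : ℕ) (hTmax : 2 ≤ Tmax)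
    (p q : ℕ → ℝ)
    (hp : ∀ t : ℕ, 2 ≤ t → t ≤ Tmax →
      p t = (Real.exp (-lam * ((t : ℝ) - 3 / 2)) - Real.exp (-lam * ((t : ℝ) - 1 / 2))) /
        (Real.exp (-lam / 2) - Real.exp (-lam * ((Tmax : ℝ) - 1 / 2))))
    (hq2 : q 2 = p 2)
    (hqt : ∀ t : ℕ, 3 ≤ t → t ≤ Tmax →
      q t = p t / ∏ k ∈ Finset.Icc 2 (t - 1), (1 - q k)) :
    (∀ t : ℕ, 2 ≤ t → t ≤ Tmax →
      q t = (Real.exp (-lam * ((t : ℝ) - 3 / 2)) - Real.exp (-lam * ((t : ℝ) - 1 / 2))) /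
        (Real.exp (-lam * ((t : ℝ) - 3 / 2)) - Real.exp (-lam * ((Tmax : ℝ) - 1 / 2)))) ∧
    q Tmax = 1 := by
  set B := Real.exp (-lam * ((Tmax : ℝ) - 1 / 2)) with hBdef
  have hB : ∀ t : ℕ, t ≤ Tmax → B < Real.exp (-lam * ((t : ℝ) - 3 / 2)) := by
    intro t ht
    apply Real.exp_lt_exp.mpr
    have h1 : (t : ℝ) ≤ (Tmax : ℝ) := Nat.cast_le.mpr ht
    nlinarith
  have hD : (0 : ℝ) < Real.exp (-lam / 2) - B := by
    have := hB 2 hTmax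
    rw [show (-lam * (((2:ℕ) : ℝ) - 3 / 2)) = -lam / 2 by push_cast; ring] at this
    linarith
  have main : ∀ t : ℕ, 2 ≤ t → t ≤ Tmax →
      (∏ k ∈ Finset.Icc 2 (t - 1), (1 - q k)
        = (Real.exp (-lam * ((t : ℝ) - 3 / 2)) - B) / (Real.exp (-lam / 2) - B)) ∧
      q t = (Real.exp (-lam * ((t : ℝ) - 3 / 2)) - Real.exp (-lam * ((t : ℝ) - 1 / 2))) /
          (Real.exp (-lam * ((t : ℝ) - 3 / 2)) - B) := by
    intro t ht2
    induction t, ht2 using Nat.le_induction with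
    | base =>
      intro _
      constructor
      · have hempty : Finset.Icc 2 (2 - 1) = (∅ : Finset ℕ) := rfl
        rw [hempty, Finset.prod_empty,
          show (-lam * (((2:ℕ) : ℝ) - 3 / 2)) = -lam / 2 by push_cast; ring]
        exact (div_self hD.ne').symm
      · rw [hq2, hp 2 le_rfl hTmax,
          show (-lam * (((2:ℕ) : ℝ) - 3 / 2)) = -lam / 2 by push_cast; ring]
    | succ n hn ih =>
      intro hle
      have hnT : n ≤ Tmax := le_of_lt (Nat.lt_of_succ_le hle)
      obtain ⟨ihp, ihq⟩ := ih hnT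
      obtain ⟨m, rfl⟩ := Nat.exists_eq_add_of_le hn
      have hAn : B < Real.exp (-lam * (2 + (m : ℝ) - 3 / 2)) := by
        have := hB (2 + m) hnT; push_cast at this; convert this using 3
      have hAn1 : B < Real.exp (-lam * (2 + (m : ℝ) + 1 - 3 / 2)) := by
        have := hB (2 + m + 1) hle; push_cast at this; convert this using 3
      have e1 : Real.exp (-lam * (2 + (m : ℝ) + 1 - 3 / 2))
          = Real.exp (-lam * (2 + (m : ℝ) - 1 / 2)) := by
        rw [Real.exp_eq_exp]; ring
      have hprod : ∏ k ∈ Finset.Icc 2 (2 + m + 1 - 1), (1 - q k)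
          = (Real.exp (-lam * (2 + (m : ℝ) + 1 - 3 / 2)) - B) / (Real.exp (-lam / 2) - B) := by
        rw [show (2 + m + 1 - 1 : ℕ) = (1 + m) + 1 by omega,
          Finset.prod_Icc_succ_top (by omega),
          show (1 + m + 1 : ℕ) = 2 + m by omega]
        rw [show (2 + m - 1 : ℕ) = 1 + m by omega] at ihp
        rw [ihp, ihq]
        push_cast
        rw [e1]
        exact stmt9_aux1 _ _ _ _ (sub_ne_zero.mpr (ne_of_gt hAn)) hD.ne'
      constructor
      · rw [hprod]; push_cast; ring_nf
      · rw [hqt (2 + m + 1) (by omega) hle, hprod, hp (2 + m + 1) (by omega) hle]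
        push_cast
        rw [e1] at hAn1 ⊢
        exact stmt9_aux2 _ _ _ hD.ne' (sub_ne_zero.mpr (ne_of_gt hAn1))
  refine ⟨fun t ht2 htT => (main t ht2 htT).2, ?_⟩
  rw [(main Tmax hTmax le_rfl).2]
  exact div_self (ne_of_gt (sub_pos.mpr (hB Tmax le_rfl)))
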